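/- Let m, g, h₂, k_α > 0 and let g₁, e_x, e_f ∈ ℝ³ with ‖g₁‖ ≤ h₂. Define f_d = m g e₃ − m g₁ + 2m tanh(e_x) − m k_α tanh(e_f). If k_α < g − h₂ − 2, then the third component of f_d satisfies (f_d)₃ ≥ m(g − h₂ − 2 − k_α) > 0; in particular f_d ≠ 0. -/

import Mathlib

noncomputable def tanhVec (v : EuclideanSpace ℝ (Fin 3)) : EuclideanSpace ℝ (Fin 3) :=
  WithLp.toLp 2 fun i => Real.tanh (v i)

noncomputable def e3 : EuclideanSpace ℝ (Fin 3) := WithLp.toLp 2 fun i => if i = 2 then 1 else 0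

lemma abs_tanh_le_one (x : ℝ) : |Real.tanh x| ≤ 1 := by
  have hc := Real.cosh_pos x
  have h1 : Real.sinh x < Real.cosh x := Real.sinh_lt_cosh x
  have h2 : -Real.sinh x < Real.cosh x := by
    have := Real.sinh_lt_cosh (-x)
    rwa [Real.sinh_neg, Real.cosh_neg] at this
  rw [Real.tanh_eq_sinh_div_cosh, abs_div, abs_of_pos hc, div_le_one hc, abs_le]
  constructor <;> linarith

theorem fd_third_component_pos (m g h₂ kα : ℝ) (hm : 0 < m) (hg : 0 < g) (hh₂ : 0 < h₂)
    (hkα : 0 < kα) (g₁ ex ef : EuclideanSpace ℝ (Fin 3)) (hg₁ : ‖g₁‖ ≤ h₂)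
    (fd : EuclideanSpace ℝ (Fin 3))
    (hfd : fd = (m * g) • e3 - m • g₁ + (2 * m) • tanhVec ex - (m * kα) • tanhVec ef)
    (hgain : kα < g - h₂ - 2) :
    fd 2 ≥ m * (g - h₂ - 2 - kα) ∧ 0 < m * (g - h₂ - 2 - kα) ∧ fd ≠ 0 := by
  have hcoord : |g₁ 2| ≤ ‖g₁‖ := by
    rw [EuclideanSpace.norm_eq]
    rw [show |g₁ 2| = Real.sqrt ((g₁ 2) ^ 2) by rw [Real.sqrt_sq_eq_abs]]
    apply Real.sqrt_le_sqrt
    have := Finset.single_le_sum (f := fun i => ‖g₁ i‖ ^ 2)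
      (fun i _ => by positivity) (Finset.mem_univ (2 : Fin 3))
    simpa [Real.norm_eq_abs, sq_abs] using this
  have hg2 : |g₁ 2| ≤ h₂ := hcoord.trans hg₁
  have htx : |Real.tanh (ex 2)| ≤ 1 := abs_tanh_le_one _
  have htf : |Real.tanh (ef 2)| ≤ 1 := abs_tanh_le_one _
  have hfd2 : fd 2 = m * g - m * g₁ 2 + 2 * m * Real.tanh (ex 2)
      - m * kα * Real.tanh (ef 2) := by
    rw [hfd]
    simp [e3, tanhVec, PiLp.sub_apply, PiLp.add_apply, PiLp.smul_apply, smul_eq_mul]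
  have h1 : fd 2 ≥ m * (g - h₂ - 2 - kα) := by
    rw [hfd2]
    have b1 : -(m * g₁ 2) ≥ -(m * h₂) := by nlinarith [abs_le.mp hg2]
    have b2 : 2 * m * Real.tanh (ex 2) ≥ -(2 * m) := by nlinarith [abs_le.mp htx]
    have b3 : m * kα * Real.tanh (ef 2) ≤ m * kα := by nlinarith [abs_le.mp htf, mul_pos hm hkα]
    nlinarith
  have h2 : 0 < m * (g - h₂ - 2 - kα) := by nlinarith
  refine ⟨h1, h2, fun h0 => ?_⟩
  rw [h0] at h1
  simp at h1
  nlinarith
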